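/- Let D ⊆ B be Banach spaces with ‖·‖_D ≥ ‖·‖_B, M ⊆ B* a bounded set, and suppose: (a) the map ξ ↦ A[ξ] from B* to bounded operators D → B satisfies ‖A[ξ] − A[η]‖_{D→B} ≤ c‖ξ − η‖_{D*}; (b) for each continuous curve ξ. in M, the generated backward propagators satisfy ‖U^{t,s}[ξ.]‖_{D→D} ≤ C and ‖U^{t,s}[ξ.]‖_{B→B} ≤ C. Then for any two curves ξ¹, ξ² in C_μ([0,r],M) and μ ∈ M, ‖(V^{t,0}[ξ¹.] − V^{t,0}[ξ².]) μ‖_{D*} ≤ c C² t ‖μ‖_{B*} · sup_{s∈[0,t]} ‖ξ¹_s − ξ²_s‖_{D*}, where V^{t,0}[ξ.] = (U^{0,t}[ξ.])*. -/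

import Mathlib

open NormedSpace Topology Filter Asymptotics

/-- The Banach-space adjoint (dual map) of a bounded operator `u : E →L[ℝ] F`,
acting on continuous duals by precomposition: `opDual u φ = φ ∘ u`. -/
noncomputable def opDual {E F : Type*} [NormedAddCommGroup E] [NormedSpace ℝ E]
    [NormedAddCommGroup F] [NormedSpace ℝ F] (u : E →L[ℝ] F) :
    StrongDual ℝ F →L[ℝ] StrongDual ℝ E :=
  (ContinuousLinearMap.compSL E F ℝ (RingHom.id ℝ) (RingHom.id ℝ)).flip u

/-- Lipschitz dependence of the dual propagators on the frozen
coefficient curve: with `‖A[ξ]−A[η]‖_{D→B} ≤ c‖ξ−η‖_{D*}` and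
`‖U^{t,s}[ξ.]‖_{D→D}, ‖U^{t,s}[ξ.]‖_{B→B} ≤ C`, one has
`‖(V^{t,0}[ξ¹]−V^{t,0}[ξ²])μ‖_{D*} ≤ c C² t ‖μ‖_{B*} sup_{s≤t}‖ξ¹_s−ξ²_s‖_{D*}`.
Here `D ⊆ B` via the norm-nonincreasing embedding `ι`, the `D*`-norm of
`ξ ∈ B*` is `‖opDual ι ξ‖`, and `V^{t,0}[ξ.] = (U^{0,t}[ξ.])*`. -/
theorem dual_propagator_lipschitz_in_coefficient_curve
    {D B : Type*} [NormedAddCommGroup D] [NormedSpace ℝ D]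
    [NormedAddCommGroup B] [NormedSpace ℝ B] [CompleteSpace B]
    (ι : D →L[ℝ] B) (hιinj : Function.Injective ι) (hιnorm : ∀ f : D, ‖ι f‖ ≤ ‖f‖)
    (c C : ℝ) (hc : 0 ≤ c) (hC : 0 ≤ C)
    (M : Set (StrongDual ℝ B)) (hbdd : Bornology.IsBounded M)
    (A : StrongDual ℝ B → D →L[ℝ] B)
    (hALip : ∀ ξ η : StrongDual ℝ B, ‖A ξ - A η‖ ≤ c * ‖opDual ι (ξ - η)‖)
    (r : ℝ) (hr : 0 < r) (μ : StrongDual ℝ B) (hμ : μ ∈ M)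
    (ξ1 ξ2 : ℝ → StrongDual ℝ B)
    (hξ1M : ∀ s ∈ Set.Icc (0 : ℝ) r, ξ1 s ∈ M) (hξ10 : ξ1 0 = μ)
    (hξ2M : ∀ s ∈ Set.Icc (0 : ℝ) r, ξ2 s ∈ M) (hξ20 : ξ2 0 = μ)
    (hξ1cont : ContinuousOn (fun s => opDual ι (ξ1 s)) (Set.Icc 0 r))
    (hξ2cont : ContinuousOn (fun s => opDual ι (ξ2 s)) (Set.Icc 0 r))
    (U1 U2 : ℝ → ℝ → B →L[ℝ] B) (UD1 UD2 : ℝ → ℝ → D →L[ℝ] D)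
    (hcompat1 : ∀ (t s : ℝ) (f : D), U1 t s (ι f) = ι (UD1 t s f))
    (hcompat2 : ∀ (t s : ℝ) (f : D), U2 t s (ι f) = ι (UD2 t s f))
    (hU1B : ∀ t s : ℝ, t ≤ s → ‖U1 t s‖ ≤ C) (hU2B : ∀ t s : ℝ, t ≤ s → ‖U2 t s‖ ≤ C)
    (hU1D : ∀ t s : ℝ, t ≤ s → ‖UD1 t s‖ ≤ C) (hU2D : ∀ t s : ℝ, t ≤ s → ‖UD2 t s‖ ≤ C)
    (hid1 : ∀ t : ℝ, U1 t t = ContinuousLinearMap.id ℝ B)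
    (hid2 : ∀ t : ℝ, U2 t t = ContinuousLinearMap.id ℝ B)
    (hchain1 : ∀ t s u : ℝ, t ≤ s → s ≤ u → (U1 t s).comp (U1 s u) = U1 t u)
    (hchain2 : ∀ t s u : ℝ, t ≤ s → s ≤ u → (U2 t s).comp (U2 s u) = U2 t u)
    -- generation of U1, U2 by the frozen families A[ξ1_t], A[ξ2_t] on D:
    (hgen1 : ∀ (t : ℝ) (f : D) (s : ℝ), t ≤ s →
      HasDerivAt (fun u : ℝ => U1 t u (ι f)) (U1 t s (A (ξ1 s) f)) s)
    (hgen2 : ∀ (u : ℝ) (f : D) (s : ℝ), s ≤ u →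
      HasDerivAt (fun v : ℝ => U2 v u (ι f)) (-(A (ξ2 s) (UD2 s u f))) s) :
    ∀ t ∈ Set.Icc (0 : ℝ) r, ∀ K : ℝ,
      (∀ s ∈ Set.Icc (0 : ℝ) t, ‖opDual ι (ξ1 s - ξ2 s)‖ ≤ K) →
      ‖opDual ι (opDual (U1 0 t) μ - opDual (U2 0 t) μ)‖ ≤
        c * C ^ 2 * t * ‖μ‖ * K := by

  intro t ht K hK
  have ht0 : (0:ℝ) ≤ t := ht.1
  have hK0 : 0 ≤ K := le_trans (norm_nonneg _) (hK 0 ⟨le_rfl, ht0⟩)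
  have key : ∀ f : D, ‖U1 0 t (ι f) - U2 0 t (ι f)‖ ≤ (c * C ^ 2 * K * ‖f‖) * t := by
    intro f
    rcases eq_or_lt_of_le ht0 with h0 | htpos
    · rw [← h0, hid1, hid2]
      simp
    · have hderiv : ∀ s ∈ Set.Icc (0:ℝ) t,
          HasDerivWithinAt (fun u => U1 0 u (U2 u t (ι f)))
            (U1 0 s ((A (ξ1 s) - A (ξ2 s)) (UD2 s t f))) (Set.Icc 0 t) s := by
        intro s hs
        set g : D := UD2 s t f with hg
        set z : B := -(A (ξ2 s) g) with hz
        have hιg : ι g = U2 s t (ι f) := (hcompat2 s t f).symm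
        have hne : (𝓝[Set.Icc (0:ℝ) t \ {s}] s).NeBot := by
          rcases lt_or_eq_of_le hs.2 with hst | hst
          · have hsub : Set.Ioo s t ⊆ Set.Icc 0 t \ {s} := fun x hx =>
              ⟨⟨le_trans hs.1 hx.1.le, hx.2.le⟩, ne_of_gt hx.1⟩
            have hmem : s ∈ closure (Set.Ioo s t) := by
              rw [closure_Ioo (ne_of_lt hst)]; exact ⟨le_rfl, hst.le⟩
            exact (mem_closure_iff_nhdsWithin_neBot.mp hmem).mono (nhdsWithin_mono s hsub)
          · have h0s : (0:ℝ) < s := hst ▸ htpos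
            have hsub : Set.Ioo (0:ℝ) s ⊆ Set.Icc 0 t \ {s} := fun x hx =>
              ⟨⟨hx.1.le, hst ▸ hx.2.le⟩, ne_of_lt hx.2⟩
            have hmem : s ∈ closure (Set.Ioo (0:ℝ) s) := by
              rw [closure_Ioo (ne_of_lt h0s)]; exact ⟨h0s.le, le_rfl⟩
            exact (mem_closure_iff_nhdsWithin_neBot.mp hmem).mono (nhdsWithin_mono s hsub)
        have hzmem : z ∈ closure (Set.range ι) := by
          have hw0 : HasDerivWithinAt (fun v => U2 v t (ι f)) z (Set.Icc 0 t) s :=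
            (hgen2 t f s hs.2).hasDerivWithinAt
          have hslope := hasDerivWithinAt_iff_tendsto_slope.mp hw0
          haveI := hne
          refine mem_closure_of_tendsto hslope (Filter.Eventually.of_forall fun u => ?_)
          refine ⟨(u - s)⁻¹ • (UD2 u t f - g), ?_⟩
          simp [slope_def_module, map_smul, map_sub, hcompat2, hg]
        have hcont : Filter.Tendsto (fun u => U1 0 u z) (𝓝[Set.Icc (0:ℝ) t] s)
            (𝓝 (U1 0 s z)) := by
          rw [Metric.tendsto_nhds]
          intro ε hε
          have hδpos : 0 < ε / (4 * (C + 1)) := by positivity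
          obtain ⟨b, hbmem, hb⟩ := Metric.mem_closure_iff.mp hzmem _ hδpos
          obtain ⟨f₀, rfl⟩ := hbmem
          have hcont0 : Filter.Tendsto (fun u => U1 0 u (ι f₀))
              (𝓝[Set.Icc (0:ℝ) t] s) (𝓝 (U1 0 s (ι f₀))) :=
            ((hgen1 0 f₀ s hs.1).continuousAt).continuousWithinAt
          have hmid := Metric.tendsto_nhds.mp hcont0 (ε/2) (by positivity)
          filter_upwards [hmid, eventually_mem_nhdsWithin] with u hu1 hu2
          have hCd : C * (ε / (4 * (C + 1))) ≤ ε / 4 := by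
            have h1 : C * (ε / (4 * (C + 1))) ≤ (C + 1) * (ε / (4 * (C + 1))) :=
              mul_le_mul_of_nonneg_right (by linarith) hδpos.le
            have h2 : (C + 1) * (ε / (4 * (C + 1))) = ε / 4 := by
              field_simp
            linarith
          have hb' : ‖z - ι f₀‖ < ε / (4 * (C + 1)) := by rwa [dist_eq_norm] at hb
          have e1 : ‖U1 0 u (z - ι f₀)‖ ≤ ε / 4 := by
            refine le_trans (le_trans ((U1 0 u).le_opNorm _) ?_) hCd
            exact mul_le_mul (hU1B 0 u hu2.1) hb'.le (norm_nonneg _) hC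
          have e3 : ‖U1 0 s (ι f₀ - z)‖ ≤ ε / 4 := by
            refine le_trans (le_trans ((U1 0 s).le_opNorm _) ?_) hCd
            rw [norm_sub_rev]
            exact mul_le_mul (hU1B 0 s hs.1) hb'.le (norm_nonneg _) hC
          have e2 : ‖U1 0 u (ι f₀) - U1 0 s (ι f₀)‖ < ε / 2 := by
            rwa [dist_eq_norm] at hu1
          have hdecomp : U1 0 u z - U1 0 s z =
              U1 0 u (z - ι f₀) + (U1 0 u (ι f₀) - U1 0 s (ι f₀)) + U1 0 s (ι f₀ - z) := by
            simp only [map_sub]; abel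
          rw [dist_eq_norm, hdecomp]
          have := norm_add₃_le (a := U1 0 u (z - ι f₀))
            (b := U1 0 u (ι f₀) - U1 0 s (ι f₀)) (c := U1 0 s (ι f₀ - z))
          linarith
        have hψ : HasDerivWithinAt (fun u => U1 0 u (U2 u t (ι f) - ι g))
            (U1 0 s z) (Set.Icc 0 t) s := by
          rw [hasDerivWithinAt_iff_isLittleO]
          have hw : HasDerivWithinAt (fun u => U2 u t (ι f) - ι g) z (Set.Icc 0 t) s :=
            ((hgen2 t f s hs.2).sub_const (ι g)).hasDerivWithinAt
          have hlo := hasDerivWithinAt_iff_isLittleO.mp hw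
          have hws : U2 s t (ι f) - ι g = 0 := by rw [hιg]; exact sub_self _
          have he1 : (fun u => U1 0 u ((U2 u t (ι f) - ι g) - (U2 s t (ι f) - ι g)
              - (u - s) • z)) =o[𝓝[Set.Icc (0:ℝ) t] s] (fun u => u - s) := by
            refine Asymptotics.IsBigO.trans_isLittleO ?_ hlo
            refine Asymptotics.IsBigO.of_bound C ?_
            filter_upwards [eventually_mem_nhdsWithin] with u hu
            exact le_trans ((U1 0 u).le_opNorm _)
              (mul_le_mul_of_nonneg_right (hU1B 0 u hu.1) (norm_nonneg _))
          have hδ : Filter.Tendsto (fun u => U1 0 u z - U1 0 s z)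
              (𝓝[Set.Icc (0:ℝ) t] s) (𝓝 0) := by
            simpa using hcont.sub (tendsto_const_nhds (x := U1 0 s z))
          have h1 : (fun u => U1 0 u z - U1 0 s z)
              =o[𝓝[Set.Icc (0:ℝ) t] s] (fun _ => (1:ℝ)) :=
            (Asymptotics.isLittleO_one_iff ℝ).mpr hδ
          have he2 : (fun u => (u - s) • (U1 0 u z - U1 0 s z))
              =o[𝓝[Set.Icc (0:ℝ) t] s] (fun u => u - s) := by
            have := (Asymptotics.isBigO_refl (fun u : ℝ => u - s)
              (𝓝[Set.Icc (0:ℝ) t] s)).smul_isLittleO h1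
            simpa using this
          have hsum := he1.add he2
          refine hsum.congr (fun u => ?_) (fun u => rfl)
          simp only [map_sub, map_smul, hws, map_zero, sub_zero, smul_sub]
          abel
        have hφ : HasDerivWithinAt (fun u => U1 0 u (ι g))
            (U1 0 s (A (ξ1 s) g)) (Set.Icc 0 t) s :=
          (hgen1 0 g s hs.1).hasDerivWithinAt
        have hsum := hφ.add hψ
        have hfun : ∀ u : ℝ, U1 0 u (U2 u t (ι f)) =
            U1 0 u (ι g) + U1 0 u (U2 u t (ι f) - ι g) := by
          intro u
          rw [← map_add]
          congr 1
          abel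
        have hder : U1 0 s (A (ξ1 s) g) + U1 0 s z =
            U1 0 s ((A (ξ1 s) - A (ξ2 s)) (UD2 s t f)) := by
          rw [hz]
          simp only [ContinuousLinearMap.sub_apply, map_sub, map_neg, ← hg]
          abel
        rw [← hder]
        exact hsum.congr (fun u _ => hfun u) (hfun s)
      have hbound : ∀ s ∈ Set.Icc (0:ℝ) t,
          ‖U1 0 s ((A (ξ1 s) - A (ξ2 s)) (UD2 s t f))‖ ≤ c * C ^ 2 * K * ‖f‖ := by
        intro s hs
        have h1 : ‖(A (ξ1 s) - A (ξ2 s)) (UD2 s t f)‖ ≤ (c * K) * (C * ‖f‖) := by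
          refine le_trans ((A (ξ1 s) - A (ξ2 s)).le_opNorm _) ?_
          refine mul_le_mul ?_ ?_ (norm_nonneg _) (mul_nonneg hc hK0)
          · exact le_trans (hALip (ξ1 s) (ξ2 s))
              (mul_le_mul_of_nonneg_left (hK s hs) hc)
          · exact le_trans ((UD2 s t).le_opNorm f)
              (mul_le_mul_of_nonneg_right (hU2D s t hs.2) (norm_nonneg f))
        calc ‖U1 0 s ((A (ξ1 s) - A (ξ2 s)) (UD2 s t f))‖
            ≤ ‖U1 0 s‖ * ‖(A (ξ1 s) - A (ξ2 s)) (UD2 s t f)‖ := (U1 0 s).le_opNorm _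
          _ ≤ C * ((c * K) * (C * ‖f‖)) :=
              mul_le_mul (hU1B 0 s hs.1) h1 (norm_nonneg _) hC
          _ = c * C ^ 2 * K * ‖f‖ := by ring
      have hMVT := Convex.norm_image_sub_le_of_norm_hasDerivWithin_le
        (f' := fun s => U1 0 s ((A (ξ1 s) - A (ξ2 s)) (UD2 s t f)))
        hderiv hbound (convex_Icc 0 t) ⟨le_rfl, ht0⟩ ⟨ht0, le_rfl⟩
      simpa [hid1, hid2, abs_of_nonneg ht0] using hMVT
  have hnn : 0 ≤ c * C ^ 2 * t * ‖μ‖ * K :=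
    mul_nonneg (mul_nonneg (mul_nonneg (mul_nonneg hc (pow_nonneg hC 2)) ht0)
      (norm_nonneg μ)) hK0
  refine ContinuousLinearMap.opNorm_le_bound _ hnn fun f => ?_
  have heval : (opDual ι (opDual (U1 0 t) μ - opDual (U2 0 t) μ)) f =
      μ (U1 0 t (ι f)) - μ (U2 0 t (ι f)) := rfl
  rw [heval, ← map_sub]
  calc ‖μ (U1 0 t (ι f) - U2 0 t (ι f))‖
      ≤ ‖μ‖ * ‖U1 0 t (ι f) - U2 0 t (ι f)‖ := μ.le_opNorm _
    _ ≤ ‖μ‖ * ((c * C ^ 2 * K * ‖f‖) * t) :=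
        mul_le_mul_of_nonneg_left (key f) (norm_nonneg μ)
    _ = c * C ^ 2 * t * ‖μ‖ * K * ‖f‖ := by ring
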